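/- For every horizon m ≥ 0, every μ ∈ ℝ and every n > 0, the Gaussian one-armed-bandit value function satisfies V_m(μ,n,γ,τ,λ) ≥ max(μ − λ, 0)/(1−γ). In particular, V_m(μ,n,γ,τ,λ) > 0 whenever λ < μ. -/
import Mathlib


open MeasureTheory ProbabilityTheory Real
open scoped NNReal ENNReal

/-- Finite-horizon value function of the Gaussian one-armed bandit:
`V γ τ m μ n λ`, with discount `γ`, observation precision `τ`, horizon `m`,
posterior state `(μ, n)` and safe-arm reward `λ`. The expectation over the
next observation is taken under the Gaussian predictive distribution
`𝒩(μ, 1/n + 1/τ)`. -/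
noncomputable def V (γ τ : ℝ) : ℕ → ℝ → ℝ → ℝ → ℝ
  | 0, μ, _n, lam => max (μ - lam) 0 / (1 - γ)
  | m + 1, μ, n, lam =>
      max (μ - lam + γ * ∫ y, V γ τ m ((n * μ + τ * y) / (n + τ)) (n + τ) lam
        ∂(gaussianReal μ (1 / n + 1 / τ).toNNReal)) 0

lemma gauss_integrable_id {w : ℝ≥0} (hw : w ≠ 0) :
    Integrable (fun x : ℝ => x) (gaussianReal 0 w) := by
  have hwpos : (0:ℝ) < w := by exact_mod_cast pos_iff_ne_zero.mpr hw
  rw [gaussianReal_of_var_ne_zero _ hw,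
    integrable_withDensity_iff (measurable_gaussianPDF _ _)
      (ae_of_all _ fun x => ENNReal.ofReal_lt_top)]
  have h := (integrable_mul_exp_neg_mul_sq (show (0:ℝ) < (2*(w:ℝ))⁻¹ by positivity)).const_mul
    ((√(2*π*(w:ℝ)))⁻¹)
  have hx : ∀ x:ℝ, x * (gaussianPDF 0 w x).toReal
      = (√(2*π*(w:ℝ)))⁻¹ * (x * rexp (-(2*(w:ℝ))⁻¹ * x^2)) := by
    intro x
    rw [gaussianPDF, ENNReal.toReal_ofReal (gaussianPDFReal_nonneg _ _ _)]
    unfold gaussianPDFReal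
    rw [sub_zero, show -x^2/(2*(w:ℝ)) = -(2*(w:ℝ))⁻¹ * x^2 by
      rw [neg_div, div_eq_inv_mul, neg_mul]]
    ring
  exact h.congr (Filter.Eventually.of_forall fun x => (hx x).symm)

lemma gauss_integral_id {w : ℝ≥0} : ∫ x, x ∂gaussianReal 0 w = 0 := by
  by_cases hw : w = 0
  · simp [hw, gaussianReal_zero_var]
  have hmap : (gaussianReal 0 w).map (fun x => (-1:ℝ) * x) = gaussianReal 0 w := by
    rw [gaussianReal_map_const_mul]
    norm_num
  have h1 : ∫ x, x ∂gaussianReal 0 w = ∫ x, (-1:ℝ) * x ∂gaussianReal 0 w := by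
    conv_lhs => rw [← hmap]
    rw [integral_map (f := fun x : ℝ => x) ((by fun_prop : Measurable (fun x : ℝ => (-1:ℝ) * x)).aemeasurable)
      measurable_id.aestronglyMeasurable]
  have h2 : ∫ x, (-1:ℝ) * x ∂gaussianReal 0 w = -∫ x, x ∂gaussianReal 0 w := by
    simp_rw [neg_one_mul]
    rw [MeasureTheory.integral_neg]
  linarith [h1, h2]

lemma gauss_comp_add {w : ℝ≥0} (f : ℝ → ℝ) (hf : Measurable f) (μ : ℝ) :
    ∫ y, f y ∂gaussianReal μ w = ∫ z, f (z + μ) ∂gaussianReal 0 w := by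
  have h : gaussianReal μ w = (gaussianReal 0 w).map (· + μ) := by
    rw [gaussianReal_map_add_const, zero_add]
  rw [h, integral_map (measurable_id'.add_const μ).aemeasurable hf.aestronglyMeasurable]

lemma V_meas (γ τ lam : ℝ) : ∀ m, ∀ n : ℝ, Measurable (fun μ => V γ τ m μ n lam) := by
  intro m
  induction m with
  | zero =>
    intro n
    exact ((measurable_id.sub_const lam).max measurable_const).div_const _
  | succ m ih =>
    intro n
    have key : (fun μ => V γ τ (m+1) μ n lam)
        = fun μ => max (μ - lam + γ * ∫ z, V γ τ m ((n*μ + τ*(z+μ))/(n+τ)) (n+τ) lam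
            ∂gaussianReal 0 ((1/n + 1/τ).toNNReal)) 0 := by
      funext μ
      show V γ τ (m+1) μ n lam = _
      simp only [V]
      rw [gauss_comp_add (fun y => V γ τ m ((n*μ+τ*y)/(n+τ)) (n+τ) lam)
        ((ih (n+τ)).comp (by fun_prop)) μ]
    rw [key]
    have hF : StronglyMeasurable
        (fun p : ℝ × ℝ => V γ τ m ((n*p.1 + τ*(p.2+p.1))/(n+τ)) (n+τ) lam) :=
      ((ih (n+τ)).comp (by fun_prop :
        Measurable fun p : ℝ×ℝ => (n*p.1+τ*(p.2+p.1))/(n+τ))).stronglyMeasurable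
    exact ((measurable_id.sub_const lam).add
      (hF.integral_prod_right'.measurable.const_mul γ)).max measurable_const

lemma V_nonneg (γ τ lam : ℝ) (hγ1 : γ < 1) : ∀ m μ n, 0 ≤ V γ τ m μ n lam := by
  intro m μ n
  cases m with
  | zero => exact div_nonneg (le_max_right _ _) (by linarith)
  | succ m => exact le_max_right _ _

lemma toNNReal_ne_zero {n τ : ℝ} (hn : 0 < n) (hτ : 0 < τ) :
    (1/n + 1/τ).toNNReal ≠ 0 :=
  (Real.toNNReal_pos.mpr (by positivity)).ne'

lemma harg {n τ : ℝ} (hn : 0 < n) (hτ : 0 < τ) (μ z : ℝ) :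
    (n*μ + τ*(z+μ))/(n+τ) = μ + (τ/(n+τ))*z := by
  have h : n + τ ≠ 0 := by positivity
  field_simp
  ring

lemma harg_abs {n τ : ℝ} (hn : 0 < n) (hτ : 0 < τ) (μ z : ℝ) :
    |(n*μ + τ*(z+μ))/(n+τ)| ≤ |μ| + |z| := by
  rw [harg hn hτ]
  refine (abs_add_le _ _).trans ?_
  rw [abs_mul]
  have h1 : |τ/(n+τ)| ≤ 1 := by
    rw [abs_of_nonneg (by positivity)]
    rw [div_le_one (by positivity)]
    linarith
  nlinarith [abs_nonneg z, abs_nonneg μ]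

lemma V_bound (γ τ lam : ℝ) (hγ0 : 0 ≤ γ) (hγ1 : γ < 1) (hτ : 0 < τ) :
    ∀ m, ∀ n : ℝ, 0 < n → ∃ a b : ℝ, 0 ≤ a ∧ 0 ≤ b ∧
      ∀ μ, V γ τ m μ n lam ≤ a + b * |μ| := by
  intro m
  induction m with
  | zero =>
    intro n hn
    have h1γ : (0:ℝ) < 1 - γ := by linarith
    refine ⟨|lam|/(1-γ), 1/(1-γ), div_nonneg (abs_nonneg _) h1γ.le, by positivity, fun μ => ?_⟩
    show max (μ - lam) 0 / (1 - γ) ≤ _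
    rw [show |lam|/(1-γ) + 1/(1-γ)*|μ| = (|lam|+|μ|)/(1-γ) from by ring]
    gcongr
    refine max_le ?_ (by positivity)
    have h2 := le_abs_self μ
    have h3 := neg_abs_le lam
    linarith
  | succ m ih =>
    intro n hn
    obtain ⟨a, b, ha, hb, hV⟩ := ih (n+τ) (by linarith)
    set w := (1/n + 1/τ).toNNReal with hwdef
    have hw : w ≠ 0 := toNNReal_ne_zero hn hτ
    set K := ∫ z, |z| ∂gaussianReal 0 w with hK
    have hK0 : 0 ≤ K := integral_nonneg fun z => abs_nonneg z
    refine ⟨|lam| + γ*(a + b*K), 1 + γ*b, by positivity, by positivity, fun μ => ?_⟩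
    have hmeasf : Measurable fun y => V γ τ m ((n*μ+τ*y)/(n+τ)) (n+τ) lam :=
      (V_meas γ τ lam m (n+τ)).comp (by fun_prop)
    show max (μ - lam + γ * ∫ y, V γ τ m ((n * μ + τ * y) / (n + τ)) (n + τ) lam
        ∂(gaussianReal μ w)) 0 ≤ _
    rw [gauss_comp_add _ hmeasf μ]
    have hintg : Integrable (fun z => (a + b*|μ|) + b*|z|) (gaussianReal 0 w) :=
      (integrable_const _).add ((gauss_integrable_id hw).abs.const_mul b)
    have hptw : ∀ z, V γ τ m ((n*μ + τ*(z+μ))/(n+τ)) (n+τ) lam ≤ (a + b*|μ|) + b*|z| := by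
      intro z
      refine (hV _).trans ?_
      have := harg_abs hn hτ μ z
      nlinarith
    have hintV : Integrable (fun z => V γ τ m ((n*μ + τ*(z+μ))/(n+τ)) (n+τ) lam)
        (gaussianReal 0 w) := by
      refine hintg.mono' (hmeasf.comp (by fun_prop)).aestronglyMeasurable ?_
      refine Filter.Eventually.of_forall fun z => ?_
      rw [Real.norm_eq_abs, abs_of_nonneg (V_nonneg γ τ lam hγ1 _ _ _)]
      exact hptw z
    have hI : (∫ z, V γ τ m ((n*μ + τ*(z+μ))/(n+τ)) (n+τ) lam ∂gaussianReal 0 w)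
        ≤ (a + b*|μ|) + b*K := by
      refine (integral_mono hintV hintg hptw).trans_eq ?_
      rw [integral_add (integrable_const _) ((gauss_integrable_id hw).abs.const_mul b),
        integral_const, integral_const_mul]
      simp [hK]
    have h1 : μ - lam ≤ |μ| + |lam| := by
      have := abs_sub_abs_le_abs_sub μ lam
      have h2 := le_abs_self (μ - lam)
      have := le_abs_self μ; have := neg_abs_le lam; linarith
    refine max_le ?_ (by positivity)
    have h3 := mul_le_mul_of_nonneg_left hI hγ0
    nlinarith [abs_nonneg μ]

lemma V_int (γ τ lam : ℝ) (hγ0 : 0 ≤ γ) (hγ1 : γ < 1) (hτ : 0 < τ)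
    (m : ℕ) {n : ℝ} (hn : 0 < n) (μ : ℝ) :
    Integrable (fun z => V γ τ m ((n*μ + τ*(z+μ))/(n+τ)) (n+τ) lam)
      (gaussianReal 0 (1/n + 1/τ).toNNReal) := by
  obtain ⟨a, b, ha, hb, hV⟩ := V_bound γ τ lam hγ0 hγ1 hτ m (n+τ) (by linarith)
  have hw : (1/n + 1/τ).toNNReal ≠ 0 := toNNReal_ne_zero hn hτ
  have hintg : Integrable (fun z => (a + b*|μ|) + b*|z|)
      (gaussianReal 0 (1/n + 1/τ).toNNReal) :=
    (integrable_const _).add ((gauss_integrable_id hw).abs.const_mul b)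
  have hmeasf : Measurable fun z : ℝ => V γ τ m ((n*μ+τ*(z+μ))/(n+τ)) (n+τ) lam :=
    (V_meas γ τ lam m (n+τ)).comp (by fun_prop)
  refine hintg.mono' hmeasf.aestronglyMeasurable ?_
  refine Filter.Eventually.of_forall fun z => ?_
  rw [Real.norm_eq_abs, abs_of_nonneg (V_nonneg γ τ lam hγ1 _ _ _)]
  refine (hV _).trans ?_
  have := harg_abs hn hτ μ z
  nlinarith

/-- For every horizon `m`, mean `μ` and `n > 0`, the Gaussian one-armed-bandit
value satisfies `V_m(μ,n,γ,τ,λ) ≥ max(μ − λ, 0)/(1−γ)`; in particular it is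
positive whenever `λ < μ`. -/
theorem nmab_value_lower_bound (γ τ lam : ℝ)
    (hγ0 : 0 ≤ γ) (hγ1 : γ < 1) (hτ : 0 < τ) :
    ∀ m : ℕ, ∀ μ n : ℝ, 0 < n →
      max (μ - lam) 0 / (1 - γ) ≤ V γ τ m μ n lam ∧
      (lam < μ → 0 < V γ τ m μ n lam) := by
  have h1γ : (0:ℝ) < 1 - γ := by linarith
  intro m
  induction m with
  | zero =>
    intro μ n hn
    refine ⟨le_refl _, fun h => ?_⟩
    show 0 < max (μ - lam) 0 / (1 - γ)
    have : max (μ - lam) 0 = μ - lam := max_eq_left (by linarith)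
    rw [this]
    exact div_pos (by linarith) h1γ
  | succ m ih =>
    intro μ n hn
    set w := (1/n + 1/τ).toNNReal with hwdef
    have hw : w ≠ 0 := toNNReal_ne_zero hn hτ
    have hmeasf : Measurable fun y => V γ τ m ((n*μ+τ*y)/(n+τ)) (n+τ) lam :=
      (V_meas γ τ lam m (n+τ)).comp (by fun_prop)
    have hVsucc : V γ τ (m+1) μ n lam
        = max (μ - lam + γ * ∫ z, V γ τ m ((n*μ + τ*(z+μ))/(n+τ)) (n+τ) lam
            ∂gaussianReal 0 w) 0 := by
      show max _ 0 = _
      rw [gauss_comp_add _ hmeasf μ]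
    have hmain : max (μ - lam) 0 / (1 - γ) ≤ V γ τ (m+1) μ n lam := by
      rcases le_or_gt μ lam with hle | hlt
      · rw [max_eq_right (by linarith), zero_div]
        exact V_nonneg γ τ lam hγ1 _ _ _
      · rw [max_eq_left (by linarith)]
        set c : ℝ := τ/(n+τ) with hc
        have hlow_int : Integrable (fun z : ℝ => (μ - lam)/(1-γ) + (c/(1-γ)) * z)
            (gaussianReal 0 w) :=
          (integrable_const _).add ((gauss_integrable_id hw).const_mul _)
        have hlow_val : (∫ z, ((μ - lam)/(1-γ) + (c/(1-γ)) * z) ∂gaussianReal 0 w)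
            = (μ - lam)/(1-γ) := by
          rw [integral_add (integrable_const _) ((gauss_integrable_id hw).const_mul _),
            integral_const, integral_const_mul, gauss_integral_id]
          simp
        have hptw : ∀ z : ℝ, (μ - lam)/(1-γ) + (c/(1-γ)) * z
            ≤ V γ τ m ((n*μ + τ*(z+μ))/(n+τ)) (n+τ) lam := by
          intro z
          have harg' := harg hn hτ (τ := τ) μ z
          have h1 : (μ - lam)/(1-γ) + (c/(1-γ)) * z = ((n*μ + τ*(z+μ))/(n+τ) - lam)/(1-γ) := by
            rw [harg', hc]; ring
          rw [h1]
          refine le_trans ?_ ((ih _ (n+τ) (by linarith)).1)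
          gcongr
          exact le_max_left _ _
        have hI : (μ - lam)/(1-γ)
            ≤ ∫ z, V γ τ m ((n*μ + τ*(z+μ))/(n+τ)) (n+τ) lam ∂gaussianReal 0 w := by
          rw [← hlow_val]
          exact integral_mono hlow_int (V_int γ τ lam hγ0 hγ1 hτ m hn μ) hptw
        rw [hVsucc]
        refine le_trans ?_ (le_max_left _ _)
        have h2 : μ - lam + γ * ((μ - lam)/(1-γ)) = (μ - lam)/(1-γ) := by
          field_simp
          ring
        nlinarith [mul_le_mul_of_nonneg_left hI hγ0]
    refine ⟨hmain, fun h => lt_of_lt_of_le ?_ hmain⟩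
    rw [max_eq_left (by linarith)]
    exact div_pos (by linarith) h1γ
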